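/- Type substitution preserves typing in System F (type substitution lemma, used in the proof of preservation for type-β-reduction): if Γ, α ⊢ e : τ (with α ∉ Γ), then for any type σ, Γ ⊢ [α:=σ]e : [α:=σ]τ, where [α:=σ]e and [α:=σ]τ are the capture-avoiding substitutions of σ for the type variable α in the term e and the type τ respectively. -/
import Mathlib


/-!
System F (extended with integer literals), formalized with de Bruijn indices
(the standard capture-avoiding representation).

Types:  τ ::= int | α | τ → τ | ∀α. τ
Terms:  e ::= n | x | λx:τ. e | e e | Λα. e | e[τ]
-/

namespace SystemF

/-- Types of System F (de Bruijn indices for type variables). -/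
inductive Ty : Type
  | int : Ty
  | var : ℕ → Ty
  | arrow : Ty → Ty → Ty
  | all : Ty → Ty
  deriving DecidableEq

/-- Shift (by one) the type variables of a type that are ≥ the cutoff `c`. -/
def Ty.shift (c : ℕ) : Ty → Ty
  | .int => .int
  | .var n => if n < c then .var n else .var (n + 1)
  | .arrow a b => .arrow (a.shift c) (b.shift c)
  | .all a => .all (a.shift (c + 1))

/-- Capture-avoiding substitution of the type `s` for type variable `c` in a type. -/
def Ty.subst : Ty → ℕ → Ty → Ty
  | .int, _, _ => .int
  | .var n, c, s => if n < c then .var n else if n = c then s else .var (n - 1)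
  | .arrow a b, c, s => .arrow (a.subst c s) (b.subst c s)
  | .all a, c, s => .all (a.subst (c + 1) (s.shift 0))

/-- Terms of System F with integer literals (de Bruijn indices for term variables). -/
inductive Tm : Type
  | lit : ℤ → Tm
  | var : ℕ → Tm
  | lam : Ty → Tm → Tm
  | app : Tm → Tm → Tm
  | tlam : Tm → Tm
  | tapp : Tm → Ty → Tm

/-- Shift (by one) the term variables of a term that are ≥ the cutoff `c`. -/
def Tm.shift (c : ℕ) : Tm → Tm
  | .lit n => .lit n
  | .var n => if n < c then .var n else .var (n + 1)
  | .lam τ e => .lam τ (e.shift (c + 1))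
  | .app a b => .app (a.shift c) (b.shift c)
  | .tlam e => .tlam (e.shift c)
  | .tapp e τ => .tapp (e.shift c) τ

/-- Shift (by one) the type variables of a term that are ≥ the cutoff `c`. -/
def Tm.tshift (c : ℕ) : Tm → Tm
  | .lit n => .lit n
  | .var n => .var n
  | .lam τ e => .lam (τ.shift c) (e.tshift c)
  | .app a b => .app (a.tshift c) (b.tshift c)
  | .tlam e => .tlam (e.tshift (c + 1))
  | .tapp e τ => .tapp (e.tshift c) (τ.shift c)

/-- Capture-avoiding substitution `[x := s]e` of the term `s`
for term variable `c` in a term. -/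
def Tm.subst : Tm → ℕ → Tm → Tm
  | .lit n, _, _ => .lit n
  | .var n, c, s => if n < c then .var n else if n = c then s else .var (n - 1)
  | .lam τ e, c, s => .lam τ (e.subst (c + 1) (s.shift 0))
  | .app a b, c, s => .app (a.subst c s) (b.subst c s)
  | .tlam e, c, s => .tlam (e.subst c (s.tshift 0))
  | .tapp e τ, c, s => .tapp (e.subst c s) τ

/-- Capture-avoiding substitution `[α := σ]e` of the type `σ`
for type variable `c` in a term. -/
def Tm.tsubst : Tm → ℕ → Ty → Tm
  | .lit n, _, _ => .lit n
  | .var n, _, _ => .var n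
  | .lam τ e, c, σ => .lam (τ.subst c σ) (e.tsubst c σ)
  | .app a b, c, σ => .app (a.tsubst c σ) (b.tsubst c σ)
  | .tlam e, c, σ => .tlam (e.tsubst (c + 1) (σ.shift 0))
  | .tapp e τ, c, σ => .tapp (e.tsubst c σ) (τ.subst c σ)

/-- The typing judgment `Γ ⊢ e : τ` of System F.  An environment is a list of
the types of the in-scope term variables; entering a type binder (`Λ`) shifts
the free type variables of the environment. -/
inductive HasTy : List Ty → Tm → Ty → Prop
  | lit {Γ : List Ty} {n : ℤ} : HasTy Γ (.lit n) .int
  | var {Γ : List Ty} {i : ℕ} {τ : Ty} : Γ[i]? = some τ → HasTy Γ (.var i) τ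
  | lam {Γ : List Ty} {τ τ' : Ty} {e : Tm} :
      HasTy (τ :: Γ) e τ' → HasTy Γ (.lam τ e) (.arrow τ τ')
  | app {Γ : List Ty} {e₁ e₂ : Tm} {τ τ' : Ty} :
      HasTy Γ e₁ (.arrow τ τ') → HasTy Γ e₂ τ → HasTy Γ (.app e₁ e₂) τ'
  | tlam {Γ : List Ty} {e : Tm} {τ : Ty} :
      HasTy (Γ.map (Ty.shift 0)) e τ → HasTy Γ (.tlam e) (.all τ)
  | tapp {Γ : List Ty} {e : Tm} {τ σ : Ty} :
      HasTy Γ e (.all τ) → HasTy Γ (.tapp e σ) (τ.subst 0 σ)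

/-- Values: integer literals, λ-abstractions, and type abstractions. -/
inductive Value : Tm → Prop
  | lit {n : ℤ} : Value (.lit n)
  | lam {τ : Ty} {e : Tm} : Value (.lam τ e)
  | tlam {e : Tm} : Value (.tlam e)

/-- The standard single-step call-by-value reduction relation. -/
inductive Step : Tm → Tm → Prop
  | beta {τ : Ty} {e v : Tm} : Value v →
      Step (.app (.lam τ e) v) (e.subst 0 v)
  | tbeta {e : Tm} {σ : Ty} :
      Step (.tapp (.tlam e) σ) (e.tsubst 0 σ)
  | app₁ {e₁ e₁' e₂ : Tm} : Step e₁ e₁' → Step (.app e₁ e₂) (.app e₁' e₂)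
  | app₂ {v e₂ e₂' : Tm} : Value v → Step e₂ e₂' → Step (.app v e₂) (.app v e₂')
  | tapp₁ {e e' : Tm} {σ : Ty} : Step e e' → Step (.tapp e σ) (.tapp e' σ)

/-- Reflexive, transitive closure of single-step reduction: `e ⟶* e'`. -/
def Steps : Tm → Tm → Prop := Relation.ReflTransGen Step

/-- `e` diverges: there is an infinite reduction sequence starting from `e`. -/
def Diverges (e : Tm) : Prop :=
  ∃ f : ℕ → Tm, f 0 = e ∧ ∀ n : ℕ, Step (f n) (f (n + 1))

/-- Lemma A: substituting at the freshly-shifted variable is the identity. -/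
theorem Ty.subst_shift (t : Ty) : ∀ (c : ℕ) (σ : Ty), (t.shift c).subst c σ = t := by
  induction t with
  | int => intros; rfl
  | var n =>
    intro c σ
    simp only [Ty.shift, Ty.subst]
    split
    · simp [Ty.subst, *]
    · have h : ¬ (n + 1 < c) := by omega
      have h2 : ¬ (n + 1 = c) := by omega
      simp [Ty.subst, h, h2]
  | arrow a b iha ihb => intro c σ; simp [Ty.shift, Ty.subst, iha, ihb]
  | all a ih => intro c σ; simp [Ty.shift, Ty.subst, ih]

/-- Lemma C: shift-shift commutation. -/
theorem Ty.shift_shift (t : Ty) : ∀ (d e : ℕ), e ≤ d →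
    (t.shift d).shift e = (t.shift e).shift (d + 1) := by
  induction t with
  | int => intros; rfl
  | var n =>
    intro d e h
    simp only [Ty.shift]
    rcases lt_or_ge n e with h1 | h1
    · have h2 : n < d := by omega
      have h3 : n < d + 1 := by omega
      simp [Ty.shift, h1, h2, h3]
    · rcases lt_or_ge n d with h2 | h2
      · have h3 : ¬ n + 1 < e := by omega
        have h4 : ¬ n < e := by omega
        have h5 : n + 1 < d + 1 := by omega
        simp [Ty.shift, h1, h2, h3, h4, h5, Nat.not_lt.2 h1]
      · have h3 : ¬ n < d := by omega
        have h4 : ¬ n + 1 < e := by omega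
        have h5 : ¬ n < e := by omega
        have h6 : ¬ n + 1 < d + 1 := by omega
        simp [Ty.shift, h3, h4, h5, h6]
  | arrow a b iha ihb => intro d e h; simp [Ty.shift, iha _ _ h, ihb _ _ h]
  | all a ih =>
    intro d e h
    simp only [Ty.shift]
    rw [ih (d + 1) (e + 1) (by omega)]

/-- Lemma B: shift-subst commutation. -/
theorem Ty.shift_subst (t : Ty) : ∀ (c d : ℕ) (σ : Ty), d ≤ c →
    (t.shift d).subst (c + 1) (σ.shift d) = (t.subst c σ).shift d := by
  induction t with
  | int => intros; rfl
  | var n =>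
    intro c d σ h
    simp only [Ty.shift, Ty.subst]
    rcases lt_or_ge n d with h1 | h1
    · have h2 : n < c := by omega
      have h3 : n < c + 1 := by omega
      simp [Ty.shift, Ty.subst, h1, h2, h3]
    · rcases lt_or_ge n c with h2 | h2
      · have h3 : n + 1 < c + 1 := by omega
        have h4 : ¬ n < d := by omega
        simp [Ty.shift, Ty.subst, h1, h2, h3, h4, Nat.not_lt.2 h1]
      · rcases eq_or_lt_of_le h2 with h3 | h3
        · have h4 : ¬ n + 1 < c + 1 := by omega
          have h5 : n + 1 = c + 1 := by omega
          have h6 : ¬ n < c := by omega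
          have h7 : n = c := h3.symm
          have h8 : ¬ c < d := by omega
          simp [Ty.shift, Ty.subst, h4, h5, h6, h7, h8]
        · have h4 : ¬ n + 1 < c + 1 := by omega
          have h5 : ¬ n + 1 = c + 1 := by omega
          have h6 : ¬ n < c := by omega
          have h7 : ¬ n = c := by omega
          have h8 : ¬ n - 1 < d := by omega
          have h9 : n + 1 - 1 = n - 1 + 1 := by omega
          have h10 : ¬ n < d := by omega
          simp [Ty.shift, Ty.subst, h4, h5, h6, h7, h8, h9, h10]
  | arrow a b iha ihb => intro c d σ h; simp [Ty.shift, Ty.subst, iha _ _ _ h, ihb _ _ _ h]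
  | all a ih =>
    intro c d σ h
    simp only [Ty.shift, Ty.subst]
    rw [Ty.shift_shift σ d 0 (by omega), ih (c + 1) (d + 1) (σ.shift 0) (by omega)]

/-- Lemma D: subst-subst commutation. -/
theorem Ty.subst_subst (t : Ty) : ∀ (c d : ℕ) (ρ σ : Ty), d ≤ c →
    (t.subst d ρ).subst c σ = (t.subst (c + 1) (σ.shift d)).subst d (ρ.subst c σ) := by
  induction t with
  | int => intros; rfl
  | var n =>
    intro c d ρ σ h
    simp only [Ty.subst]
    rcases lt_or_ge n d with h1 | h1
    · have h2 : n < c := by omega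
      have h3 : n < c + 1 := by omega
      simp [Ty.subst, h1, h2, h3]
    · rcases eq_or_lt_of_le h1 with h2 | h2
      · have h4 : n = d := h2.symm
        subst h4
        have h5 : n < c + 1 := by omega
        simp [Ty.subst, Nat.lt_irrefl, h5]
      · -- d < n
        rcases lt_or_ge n (c + 1) with h3 | h3
        · -- d < n ≤ c : n - 1 < c? if n ≤ c then n-1 < c
          have h4 : ¬ n < d := by omega
          have h5 : ¬ n = d := by omega
          have h6 : n - 1 < c := by omega
          have h7 : ¬ n < d ∧ True := ⟨h4, trivial⟩
          simp [Ty.subst, h3, h4, h5, h6]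
        · rcases eq_or_lt_of_le h3 with h4 | h4
          · -- n = c + 1
            have h5 : n - 1 = c := by omega
            have h6 : ¬ n < d := by omega
            have h7 : ¬ n = d := by omega
            have h8 : ¬ n - 1 < c := by omega
            have h9 : ¬ n < c + 1 := by omega
            have h10 : n = c + 1 := h4.symm
            have h11 : ¬ c + 1 < d := by omega
            have h12 : ¬ c + 1 = d := by omega
            have h13 : ¬ c < c := by omega
            simp [Ty.subst, h5, h6, h7, h8, h9, h10, h11, h12, h13, Ty.subst_shift]
          · -- n > c + 1
            have h5 : ¬ n < d := by omega
            have h6 : ¬ n = d := by omega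
            have h7 : ¬ n - 1 < c := by omega
            have h8 : ¬ n - 1 = c := by omega
            have h9 : ¬ n < c + 1 := by omega
            have h10 : ¬ n = c + 1 := by omega
            have h11 : ¬ n - 1 < d := by omega
            have h12 : ¬ n - 1 = d := by omega
            simp [Ty.subst, h5, h6, h7, h8, h9, h10, h11, h12]
  | arrow a b iha ihb => intro c d ρ σ h; simp [Ty.subst, iha _ _ _ _ h, ihb _ _ _ _ h]
  | all a ih =>
    intro c d ρ σ h
    simp only [Ty.subst]
    rw [ih (c + 1) (d + 1) (ρ.shift 0) (σ.shift 0) (by omega),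
        ← Ty.shift_shift σ d 0 (by omega), Ty.shift_subst ρ c 0 σ (by omega)]

/-- Generalized type substitution lemma. -/
theorem hasTy_tsubst {Δ : List Ty} {e : Tm} {τ : Ty}
    (he : HasTy Δ e τ) : ∀ (c : ℕ) (σ : Ty),
    HasTy (Δ.map (fun t => t.subst c σ)) (e.tsubst c σ) (τ.subst c σ) := by
  induction he with
  | lit => intros; exact .lit
  | var h => intro c σ; exact .var (by simp [List.getElem?_map, h])
  | lam _ ih => intro c σ; exact .lam (ih c σ)
  | app _ _ ih₁ ih₂ => intro c σ; exact .app (ih₁ c σ) (ih₂ c σ)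
  | tlam _ ih =>
    intro c σ
    refine .tlam ?_
    have := ih (c + 1) (σ.shift 0)
    rw [List.map_map] at this
    rw [List.map_map]
    have heq : (fun t => Ty.subst t (c + 1) (σ.shift 0)) ∘ Ty.shift 0
        = Ty.shift 0 ∘ (fun t => Ty.subst t c σ) := by
      funext t
      exact Ty.shift_subst t c 0 σ (by omega)
    rwa [heq] at this
  | tapp _ ih =>
    intro c σ
    rename_i τ ρ _
    have := HasTy.tapp (σ := ρ.subst c σ) (ih c σ)
    rwa [← Ty.subst_subst τ c 0 ρ σ (by omega)] at this

end SystemF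

open SystemF in
/-- Type substitution preserves typing: if `Γ, α ⊢ e : τ` (with
`α ∉ Γ`; in de Bruijn style, the environment under the type binder is `Γ` with
its free type variables shifted, so type variable 0 is fresh for `Γ`), then for
any type `σ`, `Γ ⊢ [α:=σ]e : [α:=σ]τ`. -/
theorem systemF_type_substitution {Γ : List Ty} {e : Tm} {τ σ : Ty}
    (he : HasTy (Γ.map (Ty.shift 0)) e τ) :
    HasTy Γ (e.tsubst 0 σ) (τ.subst 0 σ) := by
  have := hasTy_tsubst he 0 σ
  rwa [List.map_map, show (fun t => Ty.subst t 0 σ) ∘ Ty.shift 0 = id from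
    funext fun t => Ty.subst_shift t 0 σ, List.map_id] at this
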